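/- Let A_α, B_α, C_α (α = 1,...,m) be complex matrices of sizes k×k, k×l, l×l, set V_α = [[A_α, B_α],[0, C_α]] as block upper-triangular (k+l)×(k+l) matrices, and define Φ(X) = Σ_α V_α* X V_α and Φ_D(Y) = Σ_α C_α* Y C_α. Fix β and suppose B_β = Σ_α A_α* B_β C_α. Then for every l×l matrix Y, Φ( [[0, B_β],[0, Y]] ) = [[0, B_β],[0, Φ_D(Y) + Σ_α B_α* B_β B_α]]. Consequently, if the spectral radius of Φ_D is strictly less than 1, then X = [[0, B_β],[0, X_D]] with X_D = Σ_{n≥0} Φ_Dⁿ(Σ_α B_α* B_β B_α) is a well-defined fixed point of Φ, i.e., Φ(X) = X. -/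

import Mathlib

open Matrix Filter
open scoped ENNReal NNReal

lemma aux_fixed {E : Type*} [NormedAddCommGroup E] [NormedSpace ℂ E] [FiniteDimensional ℂ E]
    (f : Module.End ℂ E) (h : ∀ μ : ℂ, Module.End.HasEigenvalue f μ → ‖μ‖ < 1) (M : E) :
    Summable (fun n : ℕ => (f ^ n) M) ∧
      f (∑' n : ℕ, (f ^ n) M) + M = ∑' n : ℕ, (f ^ n) M := by
  rcases subsingleton_or_nontrivial E with hE | hE
  · exact ⟨(summable_congr (fun n => Subsingleton.elim _ (0 : E))).2 summable_zero,
      Subsingleton.elim _ _⟩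
  · set e := Module.End.toContinuousLinearMap (𝕜 := ℂ) E with he
    set T : E →L[ℂ] E := e f with hT
    have happ : ∀ n : ℕ, (T ^ n) M = (f ^ n) M := by
      intro n; rw [hT, ← map_pow]; rfl
    have hspec : spectrum ℂ T = spectrum ℂ f := AlgEquiv.spectrum_eq e f
    have hsr : spectralRadius ℂ T < 1 := by
      have := spectrum.spectralRadius_lt_of_forall_lt T (r := 1) ?_
      · simpa using this
      · intro z hz
        rw [hspec, ← Module.End.hasEigenvalue_iff_mem_spectrum] at hz
        have := h z hz
        rw [← NNReal.coe_lt_coe]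
        simpa using this
    obtain ⟨c, hc1, hc2⟩ := ENNReal.lt_iff_exists_nnreal_btwn.1 hsr
    have hc2' : (c : ℝ) < 1 := by exact_mod_cast ENNReal.coe_lt_coe.1 (by simpa using hc2)
    have hge := spectrum.pow_nnnorm_pow_one_div_tendsto_nhds_spectralRadius T
    have hev : ∀ᶠ n : ℕ in atTop, (‖T ^ n‖₊ : ℝ≥0∞) ^ (1 / (n : ℝ)) < (c : ℝ≥0∞) :=
      hge.eventually_lt_const hc1
    have hev2 : ∀ᶠ n : ℕ in atTop, ‖T ^ n‖ ≤ (c : ℝ) ^ n := by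
      filter_upwards [hev, eventually_ge_atTop 1] with n hn hn1
      have hn0 : (n : ℝ) ≠ 0 := by positivity
      have h1 : ((‖T ^ n‖₊ : ℝ≥0∞) ^ (1 / (n : ℝ))) ^ (n : ℝ) ≤ (c : ℝ≥0∞) ^ (n : ℝ) :=
        ENNReal.rpow_le_rpow hn.le (Nat.cast_nonneg n)
      rw [← ENNReal.rpow_mul, one_div, inv_mul_cancel₀ hn0, ENNReal.rpow_one,
        ENNReal.rpow_natCast, ← ENNReal.coe_pow, ENNReal.coe_le_coe] at h1
      exact_mod_cast h1
    have hgsum : Summable (fun n : ℕ => (c : ℝ) ^ n * ‖M‖) :=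
      (summable_geometric_of_lt_one c.2 hc2').mul_right _
    have hsumT : Summable (fun n : ℕ => (T ^ n) M) := by
      apply Summable.of_norm_bounded_eventually_nat hgsum
      filter_upwards [hev2] with n hn
      calc ‖(T ^ n) M‖ ≤ ‖T ^ n‖ * ‖M‖ := (T ^ n).le_opNorm M
        _ ≤ (c : ℝ) ^ n * ‖M‖ := by gcongr
    have hsum : Summable (fun n : ℕ => (f ^ n) M) :=
      (summable_congr fun n => happ n).1 hsumT
    refine ⟨hsum, ?_⟩
    have key : f (∑' n : ℕ, (f ^ n) M) = ∑' n : ℕ, (f ^ (n + 1)) M := by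
      have h0 : f (∑' n : ℕ, (f ^ n) M) = T (∑' n : ℕ, (f ^ n) M) := rfl
      rw [h0, T.map_tsum hsum]
      congr 1
      funext n
      rw [pow_succ']
      rfl
    rw [key, Summable.tsum_eq_zero_add hsum]
    simp [add_comm]
attribute [local instance] Matrix.normedAddCommGroup Matrix.normedSpace

theorem block_fixed_point (k l m : ℕ)
    (A : Fin m → Matrix (Fin k) (Fin k) ℂ)
    (B : Fin m → Matrix (Fin k) (Fin l) ℂ)
    (C : Fin m → Matrix (Fin l) (Fin l) ℂ)
    (V : Fin m → Matrix (Fin k ⊕ Fin l) (Fin k ⊕ Fin l) ℂ)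
    (hV : ∀ α, V α = Matrix.fromBlocks (A α) (B α) 0 (C α))
    (Φ : Matrix (Fin k ⊕ Fin l) (Fin k ⊕ Fin l) ℂ → Matrix (Fin k ⊕ Fin l) (Fin k ⊕ Fin l) ℂ)
    (hΦ : ∀ X, Φ X = ∑ α, (V α)ᴴ * X * V α)
    (ΦD : Module.End ℂ (Matrix (Fin l) (Fin l) ℂ))
    (hΦD : ∀ Y, ΦD Y = ∑ α, (C α)ᴴ * Y * C α)
    (β : Fin m)
    (hB : B β = ∑ α, (A α)ᴴ * B β * C α) :
    (∀ Y : Matrix (Fin l) (Fin l) ℂ,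
      Φ (Matrix.fromBlocks 0 (B β) 0 Y) =
        Matrix.fromBlocks 0 (B β) 0 (ΦD Y + ∑ α, (B α)ᴴ * B β * C α)) ∧
    ((∀ μ : ℂ, Module.End.HasEigenvalue ΦD μ → ‖μ‖ < 1) →
      Summable (fun n : ℕ => (ΦD ^ n) (∑ α, (B α)ᴴ * B β * C α)) ∧
      Φ (Matrix.fromBlocks 0 (B β) 0 (∑' n : ℕ, (ΦD ^ n) (∑ α, (B α)ᴴ * B β * C α))) =
        Matrix.fromBlocks 0 (B β) 0 (∑' n : ℕ, (ΦD ^ n) (∑ α, (B α)ᴴ * B β * C α))) := by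
  have h1 : ∀ Y : Matrix (Fin l) (Fin l) ℂ,
      Φ (Matrix.fromBlocks 0 (B β) 0 Y) =
        Matrix.fromBlocks 0 (B β) 0 (ΦD Y + ∑ α, (B α)ᴴ * B β * C α) := by
    intro Y
    rw [hΦ, hΦD]
    have hterm : ∀ α : Fin m, (V α)ᴴ * Matrix.fromBlocks 0 (B β) 0 Y * V α =
        Matrix.fromBlocks 0 ((A α)ᴴ * B β * C α) 0
          ((B α)ᴴ * B β * C α + (C α)ᴴ * Y * C α) := by
      intro α
      rw [hV, fromBlocks_conjTranspose, fromBlocks_multiply, fromBlocks_multiply]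
      simp [Matrix.add_mul, Matrix.mul_assoc]
    rw [Finset.sum_congr rfl fun α _ => hterm α]
    ext i j
    rcases i with i | i <;> rcases j with j | j <;>
      simp [Matrix.sum_apply, Finset.sum_add_distrib]
    · exact (Matrix.sum_apply i j _ _).symm.trans (congrFun (congrFun hB.symm i) j)
    · exact add_comm _ _
  refine ⟨h1, fun hμ => ?_⟩
  obtain ⟨hsum, hfix⟩ := aux_fixed ΦD hμ (∑ α, (B α)ᴴ * B β * C α)
  exact ⟨hsum, by rw [h1]; exact congrArg (fun Z => Matrix.fromBlocks 0 (B β) 0 Z) hfix⟩
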